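/- Stochastic gradient descent under the strong growth condition satisfies E‖z_{k+1} - z*‖² ≤ (1 - 2ηm + η²δL²)‖z_k - z*‖², where the expectation is over the stochastic sample ε_k; in particular, with η = 1/(Lκδ) one obtains E‖z_k - z*‖² ≤ (1 - 1/(κ²δ))^k ‖z_0 - z*‖². -/

import Mathlib

open RealInnerProductSpace MeasureTheory

lemma sga_rw {d : ℕ} {Ω : Type*}
    (F : EuclideanSpace ℝ (Fin d) → Ω → EuclideanSpace ℝ (Fin d))
    (zs zk : EuclideanSpace ℝ (Fin d)) (η' : ℝ) :
    (fun ω => ‖(zk - η' • F zk ω) - zs‖ ^ 2)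
      = fun ω => ‖zk - zs‖ ^ 2 - 2 * η' * ⟪zk - zs, F zk ω⟫ + η' ^ 2 * ‖F zk ω‖ ^ 2 := by
  funext ω
  have h1 : zk - η' • F zk ω - zs = (zk - zs) - η' • F zk ω := by abel
  rw [h1, norm_sub_sq_real, inner_smul_right, norm_smul, Real.norm_eq_abs, mul_pow, sq_abs]
  ring

lemma sga_int {d : ℕ} {Ω : Type*} [MeasurableSpace Ω] (μ : Measure Ω) [IsProbabilityMeasure μ]
    (F : EuclideanSpace ℝ (Fin d) → Ω → EuclideanSpace ℝ (Fin d))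
    (hFint : ∀ z, Integrable (F z) μ)
    (hFsq : ∀ z, Integrable (fun ω => ‖F z ω‖ ^ 2) μ)
    (zs zk : EuclideanSpace ℝ (Fin d)) (η' : ℝ) :
    Integrable (fun ω => ‖(zk - η' • F zk ω) - zs‖ ^ 2) μ := by
  rw [sga_rw]
  have hinner : Integrable (fun ω => ⟪zk - zs, F zk ω⟫) μ :=
    (innerSL ℝ (zk - zs)).integrable_comp (hFint zk)
  exact ((integrable_const _).sub (hinner.const_mul _)).add ((hFsq zk).const_mul _)

lemma sga_step {d : ℕ} {m L δ : ℝ} (hm : 0 < m) (hδ : 1 ≤ δ)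
    {Ω : Type*} [MeasurableSpace Ω] (μ : Measure Ω) [IsProbabilityMeasure μ]
    (F : EuclideanSpace ℝ (Fin d) → Ω → EuclideanSpace ℝ (Fin d))
    (hFint : ∀ z, Integrable (F z) μ)
    (hFsq : ∀ z, Integrable (fun ω => ‖F z ω‖ ^ 2) μ)
    (Fbar : EuclideanSpace ℝ (Fin d) → EuclideanSpace ℝ (Fin d))
    (hFbar : ∀ z, Fbar z = ∫ ω, F z ω ∂μ)
    (hmono : ∀ z₁ z₂, ⟪Fbar z₁ - Fbar z₂, z₁ - z₂⟫ ≥ m * ‖z₁ - z₂‖ ^ 2)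
    (hlip : ∀ z₁ z₂, ‖Fbar z₁ - Fbar z₂‖ ≤ L * ‖z₁ - z₂‖)
    (zs : EuclideanSpace ℝ (Fin d)) (hzs : Fbar zs = 0)
    (hgrowth : ∀ z, ∫ ω, ‖F z ω‖ ^ 2 ∂μ ≤ δ * ‖Fbar z‖ ^ 2)
    (η' : ℝ) (hη' : 0 ≤ η') (zk : EuclideanSpace ℝ (Fin d)) :
    ∫ ω, ‖(zk - η' • F zk ω) - zs‖ ^ 2 ∂μ
      ≤ (1 - 2 * η' * m + η' ^ 2 * δ * L ^ 2) * ‖zk - zs‖ ^ 2 := by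
  have hinner : Integrable (fun ω => ⟪zk - zs, F zk ω⟫) μ :=
    (innerSL ℝ (zk - zs)).integrable_comp (hFint zk)
  have hFmean : ∫ ω, ⟪zk - zs, F zk ω⟫ ∂μ = ⟪zk - zs, Fbar zk⟫ := by
    rw [hFbar]
    exact (innerSL ℝ (zk - zs)).integral_comp_comm (hFint zk)
  have hI1 : Integrable (fun ω => ‖zk - zs‖ ^ 2 - 2 * η' * ⟪zk - zs, F zk ω⟫) μ :=
    (integrable_const _).sub (hinner.const_mul _)
  have hI2 : Integrable (fun ω => η' ^ 2 * ‖F zk ω‖ ^ 2) μ := (hFsq zk).const_mul _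
  rw [sga_rw]
  rw [integral_add hI1 hI2, integral_sub (integrable_const _) (hinner.const_mul _),
    integral_const, integral_const_mul, integral_const_mul, hFmean]
  simp only [probReal_univ, one_smul, smul_eq_mul]
  have hA : m * ‖zk - zs‖ ^ 2 ≤ ⟪zk - zs, Fbar zk⟫ := by
    have h := hmono zk zs
    rw [hzs, sub_zero] at h
    rwa [real_inner_comm] at h
  have hB : ∫ ω, ‖F zk ω‖ ^ 2 ∂μ ≤ δ * (L ^ 2 * ‖zk - zs‖ ^ 2) := by
    have h1 := hgrowth zk
    have h2 := hlip zk zs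
    rw [hzs, sub_zero] at h2
    have h3 : ‖Fbar zk‖ ^ 2 ≤ (L * ‖zk - zs‖) ^ 2 :=
      pow_le_pow_left₀ (norm_nonneg _) h2 2
    nlinarith [norm_nonneg (Fbar zk)]
  nlinarith [mul_nonneg hη' (sub_nonneg.2 hA),
    mul_nonneg (sq_nonneg η') (sub_nonneg.2 hB)]

theorem stmt_10 (d : ℕ) (m L κ δ : ℝ) (hm : 0 < m) (hmL : m ≤ L) (hκ : κ = L / m)
    (hδ : 1 ≤ δ)
    {Ω : Type*} [MeasurableSpace Ω] (μ : Measure Ω) [IsProbabilityMeasure μ]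
    [MeasurableSpace (EuclideanSpace ℝ (Fin d))] [BorelSpace (EuclideanSpace ℝ (Fin d))]
    (F : EuclideanSpace ℝ (Fin d) → Ω → EuclideanSpace ℝ (Fin d))
    (hFmeas : Measurable (Function.uncurry F))
    (hFint : ∀ z, Integrable (F z) μ)
    (hFsq : ∀ z, Integrable (fun ω => ‖F z ω‖ ^ 2) μ)
    (Fbar : EuclideanSpace ℝ (Fin d) → EuclideanSpace ℝ (Fin d))
    (hFbar : ∀ z, Fbar z = ∫ ω, F z ω ∂μ)
    (hmono : ∀ z₁ z₂, ⟪Fbar z₁ - Fbar z₂, z₁ - z₂⟫ ≥ m * ‖z₁ - z₂‖ ^ 2)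
    (hlip : ∀ z₁ z₂, ‖Fbar z₁ - Fbar z₂‖ ≤ L * ‖z₁ - z₂‖)
    (zs : EuclideanSpace ℝ (Fin d)) (hzs : Fbar zs = 0)
    (hgrowth : ∀ z, ∫ ω, ‖F z ω‖ ^ 2 ∂μ ≤ δ * ‖Fbar z‖ ^ 2)
    (η : ℝ) (hη : η = 1 / (L * κ * δ))
    (z : (k : ℕ) → (Fin k → Ω) → EuclideanSpace ℝ (Fin d))
    (z0 : EuclideanSpace ℝ (Fin d)) (hz0 : ∀ ω, z 0 ω = z0)
    (hiter : ∀ k ω, z (k + 1) ω =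
      z k (fun i => ω i.castSucc) - η • F (z k (fun i => ω i.castSucc)) (ω (Fin.last k))) :
    (∀ η' : ℝ, 0 < η' → ∀ zk : EuclideanSpace ℝ (Fin d),
      ∫ ω, ‖(zk - η' • F zk ω) - zs‖ ^ 2 ∂μ
        ≤ (1 - 2 * η' * m + η' ^ 2 * δ * L ^ 2) * ‖zk - zs‖ ^ 2) ∧
    (∀ k, ∫ ω, ‖z k ω - zs‖ ^ 2 ∂(Measure.pi fun _ : Fin k => μ)
        ≤ (1 - 1 / (κ ^ 2 * δ)) ^ k * ‖z0 - zs‖ ^ 2) := by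
  have hL : 0 < L := lt_of_lt_of_le hm hmL
  have hδ0 : 0 < δ := lt_of_lt_of_le one_pos hδ
  have hκ1 : 1 ≤ κ := by rw [hκ]; exact (one_le_div hm).2 hmL
  have hη0 : 0 ≤ η := by
    rw [hη]
    positivity
  set ρ : ℝ := 1 - 1 / (κ ^ 2 * δ) with hρ
  have hρ0 : 0 ≤ ρ := by
    rw [hρ]
    have h1 : 1 ≤ κ ^ 2 * δ := by nlinarith
    have : 1 / (κ ^ 2 * δ) ≤ 1 := by
      rw [div_le_one (by linarith)]; exact h1
    linarith
  have hc : 1 - 2 * η * m + η ^ 2 * δ * L ^ 2 = ρ := by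
    rw [hρ, hη, hκ]
    field_simp
    ring
  refine ⟨fun η' hη' zk => sga_step hm hδ μ F hFint hFsq Fbar hFbar hmono hlip zs hzs
    hgrowth η' hη'.le zk, ?_⟩
  -- measurability of iterates
  have hzmeas : ∀ k, Measurable (z k) := by
    intro k
    induction k with
    | zero =>
      have h : z 0 = fun _ => z0 := funext hz0
      rw [h]; exact measurable_const
    | succ k ih =>
      have h : z (k + 1) = fun ω => z k (fun i => ω i.castSucc)
          - η • F (z k (fun i => ω i.castSucc)) (ω (Fin.last k)) := funext (hiter k)
      rw [h]
      have hcast : Measurable (fun ω : Fin (k + 1) → Ω => fun i : Fin k => ω i.castSucc) :=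
        measurable_pi_lambda _ fun i => measurable_pi_apply _
      exact ((ih.comp hcast).sub
        ((hFmeas.comp ((ih.comp hcast).prodMk (measurable_pi_apply _))).const_smul η))
  have hnmeas : ∀ k, Measurable (fun ω : Fin k → Ω => ‖z k ω - zs‖ ^ 2) := fun k =>
    (((hzmeas k).sub measurable_const).norm).pow_const 2
  -- key lintegral bound
  have key : ∀ k, ∫⁻ ω, ENNReal.ofReal (‖z k ω - zs‖ ^ 2) ∂(Measure.pi fun _ : Fin k => μ)
      ≤ ENNReal.ofReal (ρ ^ k * ‖z0 - zs‖ ^ 2) := by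
    intro k
    induction k with
    | zero =>
      have h : (fun ω : Fin 0 → Ω => ENNReal.ofReal (‖z 0 ω - zs‖ ^ 2))
          = fun _ => ENNReal.ofReal (‖z0 - zs‖ ^ 2) := by
        funext ω; rw [hz0]
      rw [h, lintegral_const, measure_univ, mul_one, pow_zero, one_mul]
    | succ k ih =>
      set π : Measure (Fin k → Ω) := Measure.pi fun _ : Fin k => μ with hπ
      have hmp := (measurePreserving_piFinSuccAbove (fun _ : Fin (k + 1) => μ) (Fin.last k)).symm
      have hfm : Measurable fun ω : Fin (k + 1) → Ω => ENNReal.ofReal (‖z (k + 1) ω - zs‖ ^ 2) :=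
        ENNReal.measurable_ofReal.comp (hnmeas (k + 1))
      rw [← hmp.lintegral_comp hfm]
      have heq : ∀ p : Ω × (Fin k → Ω),
          z (k + 1) ((MeasurableEquiv.piFinSuccAbove (fun _ : Fin (k + 1) => Ω)
            (Fin.last k)).symm p) = z k p.2 - η • F (z k p.2) p.1 := by
        intro p
        have hs : ((MeasurableEquiv.piFinSuccAbove (fun _ : Fin (k + 1) => Ω)
            (Fin.last k)).symm p) = Fin.snoc p.2 p.1 := by
          simp [MeasurableEquiv.piFinSuccAbove, Fin.insertNthEquiv, Fin.insertNth_last']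
        rw [hs, hiter]
        simp
      have hrw2 : (fun p : Ω × (Fin k → Ω) => ENNReal.ofReal
          (‖z (k + 1) ((MeasurableEquiv.piFinSuccAbove (fun _ : Fin (k + 1) => Ω)
            (Fin.last k)).symm p) - zs‖ ^ 2))
          = fun p => ENNReal.ofReal (‖(z k p.2 - η • F (z k p.2) p.1) - zs‖ ^ 2) :=
        funext fun p => by rw [heq]
      calc ∫⁻ p, ENNReal.ofReal (‖z (k + 1) ((MeasurableEquiv.piFinSuccAbove
              (fun _ : Fin (k + 1) => Ω) (Fin.last k)).symm p) - zs‖ ^ 2) ∂(μ.prod π)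
          = ∫⁻ b, ∫⁻ a, ENNReal.ofReal (‖(z k b - η • F (z k b) a) - zs‖ ^ 2) ∂μ ∂π := by
            rw [hrw2, lintegral_prod_symm']
            exact ENNReal.measurable_ofReal.comp
              ((((((hzmeas k).comp measurable_snd).sub
                ((hFmeas.comp (((hzmeas k).comp measurable_snd).prodMk
                  measurable_fst)).const_smul η)).sub measurable_const).norm).pow_const 2)
        _ ≤ ∫⁻ b, ENNReal.ofReal ρ * ENNReal.ofReal (‖z k b - zs‖ ^ 2) ∂π := by
            refine lintegral_mono fun b => ?_
            have hint := sga_int μ F hFint hFsq zs (z k b) η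
            rw [← ofReal_integral_eq_lintegral_ofReal hint
              (Filter.Eventually.of_forall fun a => sq_nonneg _), ← ENNReal.ofReal_mul hρ0]
            refine ENNReal.ofReal_le_ofReal ?_
            calc ∫ a, ‖(z k b - η • F (z k b) a) - zs‖ ^ 2 ∂μ
                ≤ (1 - 2 * η * m + η ^ 2 * δ * L ^ 2) * ‖z k b - zs‖ ^ 2 :=
                  sga_step hm hδ μ F hFint hFsq Fbar hFbar hmono hlip zs hzs hgrowth η hη0 _
              _ = ρ * ‖z k b - zs‖ ^ 2 := by rw [hc]
        _ = ENNReal.ofReal ρ * ∫⁻ b, ENNReal.ofReal (‖z k b - zs‖ ^ 2) ∂π :=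
            lintegral_const_mul _ (ENNReal.measurable_ofReal.comp (hnmeas k))
        _ ≤ ENNReal.ofReal ρ * ENNReal.ofReal (ρ ^ k * ‖z0 - zs‖ ^ 2) :=
            mul_le_mul_right ih _
        _ = ENNReal.ofReal (ρ ^ (k + 1) * ‖z0 - zs‖ ^ 2) := by
            rw [← ENNReal.ofReal_mul hρ0]; ring_nf
  intro k
  rw [integral_eq_lintegral_of_nonneg_ae (Filter.Eventually.of_forall fun ω => sq_nonneg _)
    (hnmeas k).aestronglyMeasurable]
  calc (∫⁻ ω, ENNReal.ofReal (‖z k ω - zs‖ ^ 2) ∂(Measure.pi fun _ : Fin k => μ)).toReal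
      ≤ (ENNReal.ofReal (ρ ^ k * ‖z0 - zs‖ ^ 2)).toReal :=
        ENNReal.toReal_mono ENNReal.ofReal_ne_top (key k)
    _ = ρ ^ k * ‖z0 - zs‖ ^ 2 :=
        ENNReal.toReal_ofReal (mul_nonneg (pow_nonneg hρ0 k) (sq_nonneg _))
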